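/- Let H and H̃ be separable complex Hilbert spaces, A ∈ B(H) and B ∈ B(H̃), and assume σ(B) = σ_p(B) = ℂ \ ρ_sF(A). Then for the direct sum operator A ⊕ B on H ⊕ H̃: (i) σ(A ⊕ B) = σ(A); (ii) σ_c(A ⊕ B) = ∅; (iii) σ_e(A ⊕ B) = σ_e(A); (iv) σ_0(A ⊕ B) = σ_0(A) and dim(ker(A ⊕ B − λ)) = dim(ker(A − λ)) for all λ ∈ σ_0(A). -/

import Mathlib

noncomputable section

/-- The point spectrum of a bounded operator: the set of `l : ℂ` such that
`T - l • id` has nontrivial kernel. -/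
def pointSpectrum {E : Type*} [NormedAddCommGroup E] [InnerProductSpace ℂ E]
    (T : E →L[ℂ] E) : Set ℂ :=
  {l : ℂ | LinearMap.ker ((T - l • (1 : E →L[ℂ] E) : E →L[ℂ] E) : E →ₗ[ℂ] E) ≠ ⊥}

/-- The continuous spectrum of a bounded operator on a Hilbert space:
`σ_c(T) = σ(T) \\ (σ_p(T) ∪ conj (σ_p(T*)))`. -/
def continuousSpectrum {E : Type*} [NormedAddCommGroup E] [InnerProductSpace ℂ E]
    [CompleteSpace E] (T : E →L[ℂ] E) : Set ℂ :=
  spectrum ℂ T \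
    (pointSpectrum T ∪ (starRingEnd ℂ) '' pointSpectrum (ContinuousLinearMap.adjoint T))

/-- An operator is semi-Fredholm if it has closed range and its kernel or the kernel
of its adjoint is finite dimensional. -/
def IsSemiFredholm {E : Type*} [NormedAddCommGroup E] [InnerProductSpace ℂ E]
    [CompleteSpace E] (T : E →L[ℂ] E) : Prop :=
  IsClosed (Set.range T) ∧
    (FiniteDimensional ℂ (LinearMap.ker (T : E →ₗ[ℂ] E)) ∨
      FiniteDimensional ℂ (LinearMap.ker ((ContinuousLinearMap.adjoint T : E →L[ℂ] E) : E →ₗ[ℂ] E)))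

/-- `ρ_sF(T)`: the set of `l : ℂ` such that `T - l • id` is semi-Fredholm. -/
def rhoSF {E : Type*} [NormedAddCommGroup E] [InnerProductSpace ℂ E]
    [CompleteSpace E] (T : E →L[ℂ] E) : Set ℂ :=
  {l : ℂ | IsSemiFredholm (T - l • (1 : E →L[ℂ] E))}

/-- Invertibility modulo the compact operators, i.e. invertibility of the image of the
operator in the Calkin algebra `B(H)/K(H)`. -/
def essInvertible {E : Type*} [NormedAddCommGroup E] [InnerProductSpace ℂ E]
    [CompleteSpace E] (T : E →L[ℂ] E) : Prop :=
  ∃ S : E →L[ℂ] E, IsCompactOperator ⇑(S * T - 1) ∧ IsCompactOperator ⇑(T * S - 1)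

/-- The essential spectrum of `T`: the spectrum of the image of `T` in the Calkin
algebra `B(H)/K(H)`, i.e. the set of `l : ℂ` such that `T - l • id` is not invertible
modulo the compact operators. -/
def essSpectrum {E : Type*} [NormedAddCommGroup E] [InnerProductSpace ℂ E]
    [CompleteSpace E] (T : E →L[ℂ] E) : Set ℂ :=
  {l : ℂ | ¬ essInvertible (T - l • (1 : E →L[ℂ] E))}

/-- The normal spectrum `σ_0(T)`: the isolated points of the spectrum of `T` which do
not belong to the essential spectrum of `T`. -/
def normalSpectrum {E : Type*} [NormedAddCommGroup E] [InnerProductSpace ℂ E]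
    [CompleteSpace E] (T : E →L[ℂ] E) : Set ℂ :=
  {l : ℂ | l ∈ spectrum ℂ T ∧ (∃ U ∈ nhds l, spectrum ℂ T ∩ U = {l}) ∧ l ∉ essSpectrum T}

/-- The direct sum `A ⊕ B` of two operators, acting on the Hilbert space direct sum
`H ⊕ H̃`, realized as `WithLp 2 (E × F)`. -/
noncomputable def dsum {E F : Type*} [NormedAddCommGroup E] [InnerProductSpace ℂ E]
    [NormedAddCommGroup F] [InnerProductSpace ℂ F]
    (A : E →L[ℂ] E) (B : F →L[ℂ] F) : WithLp 2 (E × F) →L[ℂ] WithLp 2 (E × F) :=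
  ((WithLp.prodContinuousLinearEquiv 2 ℂ E F).symm : (E × F) →L[ℂ] WithLp 2 (E × F)) ∘L
    (A.prodMap B) ∘L
    ((WithLp.prodContinuousLinearEquiv 2 ℂ E F) : WithLp 2 (E × F) →L[ℂ] (E × F))

universe u

section Aux
variable {E F : Type u} [NormedAddCommGroup E] [InnerProductSpace ℂ E] [CompleteSpace E]
  [NormedAddCommGroup F] [InnerProductSpace ℂ F] [CompleteSpace F]

set_option linter.unusedSectionVars false
set_option linter.unnecessarySeqFocus false

lemma dsum_sub_smul (A : E →L[ℂ] E) (B : F →L[ℂ] F) (l : ℂ) :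
    dsum A B - l • (1 : WithLp 2 (E × F) →L[ℂ] WithLp 2 (E × F))
      = dsum (A - l • 1) (B - l • 1) := by
  ext x <;> rfl

lemma dsum_mul (A A' : E →L[ℂ] E) (B B' : F →L[ℂ] F) :
    dsum A B * dsum A' B' = dsum (A * A') (B * B') := by ext x <;> rfl
lemma dsum_one : dsum (1 : E →L[ℂ] E) (1 : F →L[ℂ] F) = 1 := by ext x <;> rfl

lemma isUnit_dsum {A : E →L[ℂ] E} {B : F →L[ℂ] F} :
    IsUnit (dsum A B) ↔ IsUnit A ∧ IsUnit B := by
  constructor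
  · rintro ⟨u, hu⟩
    have h1 : (↑u⁻¹ : _) * dsum A B = 1 := by rw [← hu]; exact u.inv_mul
    have h2 : dsum A B * (↑u⁻¹ : _) = 1 := by rw [← hu]; exact u.mul_inv
    set e := WithLp.prodContinuousLinearEquiv 2 ℂ E F
    set D : (E × F) →L[ℂ] (E × F) :=
      (e : WithLp 2 (E × F) →L[ℂ] E × F) ∘L (↑u⁻¹ : _) ∘L
        (e.symm : (E × F) →L[ℂ] WithLp 2 (E × F)) with hD
    have hDP : ∀ y : E × F, D (A.prodMap B y) = y := by
      intro y
      have := congrFun (congrArg (fun T : WithLp 2 (E × F) →L[ℂ] _ => ⇑T) h1) (e.symm y)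
      exact congrArg e this
    have hPD : ∀ y : E × F, A.prodMap B (D y) = y := by
      intro y
      have := congrFun (congrArg (fun T : WithLp 2 (E × F) →L[ℂ] _ => ⇑T) h2) (e.symm y)
      exact congrArg e this
    constructor
    · refine ⟨⟨A, (ContinuousLinearMap.fst ℂ E F) ∘L D ∘L (ContinuousLinearMap.inl ℂ E F),
        ?_, ?_⟩, rfl⟩
      · ext x; simpa using congrArg Prod.fst (hPD (x, 0))
      · ext x; simpa using congrArg Prod.fst (hDP (x, 0))
    · refine ⟨⟨B, (ContinuousLinearMap.snd ℂ E F) ∘L D ∘L (ContinuousLinearMap.inr ℂ E F),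
        ?_, ?_⟩, rfl⟩
      · ext x; simpa using congrArg Prod.snd (hPD (0, x))
      · ext x; simpa using congrArg Prod.snd (hDP (0, x))
  · rintro ⟨⟨uA, hA⟩, ⟨uB, hB⟩⟩
    refine ⟨⟨dsum A B, dsum ↑uA⁻¹ ↑uB⁻¹, ?_, ?_⟩, rfl⟩
    · rw [dsum_mul, ← hA, ← hB, Units.mul_inv, Units.mul_inv, dsum_one]
    · rw [dsum_mul, ← hA, ← hB, Units.inv_mul, Units.inv_mul, dsum_one]

lemma spectrum_dsum (A : E →L[ℂ] E) (B : F →L[ℂ] F) :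
    spectrum ℂ (dsum A B) = spectrum ℂ A ∪ spectrum ℂ B := by
  ext l
  simp only [Set.mem_union, spectrum.mem_iff]
  rw [← not_and_or, not_iff_not]
  have : algebraMap ℂ (WithLp 2 (E × F) →L[ℂ] WithLp 2 (E × F)) l - dsum A B
      = dsum (algebraMap ℂ _ l - A) (algebraMap ℂ _ l - B) := by
    simp only [Algebra.algebraMap_eq_smul_one]
    rw [← dsum_one]
    ext x <;> rfl
  rw [this, isUnit_dsum]

lemma mem_ker_dsum_iff {A : E →L[ℂ] E} {B : F →L[ℂ] F} {x : WithLp 2 (E × F)} :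
    x ∈ LinearMap.ker (dsum A B : WithLp 2 (E × F) →ₗ[ℂ] WithLp 2 (E × F)) ↔ A x.fst = 0 ∧ B x.snd = 0 := by
  constructor
  · intro h
    have h1 := congrArg Prod.fst (congrArg (WithLp.prodContinuousLinearEquiv 2 ℂ E F)
      (LinearMap.mem_ker.mp h))
    have h2 := congrArg Prod.snd (congrArg (WithLp.prodContinuousLinearEquiv 2 ℂ E F)
      (LinearMap.mem_ker.mp h))
    exact ⟨by simpa [dsum] using h1, by simpa [dsum] using h2⟩
  · rintro ⟨h1, h2⟩
    show dsum A B x = 0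
    have : dsum A B x = (WithLp.prodContinuousLinearEquiv 2 ℂ E F).symm (A x.fst, B x.snd) := rfl
    rw [this, h1, h2]
    simp

lemma ker_dsum_eq_bot_iff {A : E →L[ℂ] E} {B : F →L[ℂ] F} :
    LinearMap.ker (dsum A B : WithLp 2 (E × F) →ₗ[ℂ] WithLp 2 (E × F)) = ⊥ ↔ LinearMap.ker (A : E →ₗ[ℂ] E) = ⊥ ∧ LinearMap.ker (B : F →ₗ[ℂ] F) = ⊥ := by
  constructor
  · intro h
    constructor
    · rw [Submodule.eq_bot_iff]; intro x hx
      have : ((WithLp.prodContinuousLinearEquiv 2 ℂ E F).symm (x, 0) : WithLp 2 (E × F)) = 0 :=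
        (Submodule.eq_bot_iff _).mp h _ (mem_ker_dsum_iff.mpr ⟨hx, by simp⟩)
      simpa using congrArg Prod.fst (congrArg (WithLp.prodContinuousLinearEquiv 2 ℂ E F) this)
    · rw [Submodule.eq_bot_iff]; intro x hx
      have : ((WithLp.prodContinuousLinearEquiv 2 ℂ E F).symm (0, x) : WithLp 2 (E × F)) = 0 :=
        (Submodule.eq_bot_iff _).mp h _ (mem_ker_dsum_iff.mpr ⟨by simp, hx⟩)
      simpa using congrArg Prod.snd (congrArg (WithLp.prodContinuousLinearEquiv 2 ℂ E F) this)
  · rintro ⟨h1, h2⟩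
    rw [Submodule.eq_bot_iff]; intro x hx
    obtain ⟨hx1, hx2⟩ := mem_ker_dsum_iff.mp hx
    have e1 : x.fst = 0 := (Submodule.eq_bot_iff _).mp h1 _ (LinearMap.mem_ker.mpr hx1)
    have e2 : x.snd = 0 := (Submodule.eq_bot_iff _).mp h2 _ (LinearMap.mem_ker.mpr hx2)
    have : x = (WithLp.prodContinuousLinearEquiv 2 ℂ E F).symm (x.fst, x.snd) := rfl
    rw [this, e1, e2]; simp

lemma adjoint_dsum (A : E →L[ℂ] E) (B : F →L[ℂ] F) :
    ContinuousLinearMap.adjoint (dsum A B)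
      = dsum (ContinuousLinearMap.adjoint A) (ContinuousLinearMap.adjoint B) := by
  symm
  rw [ContinuousLinearMap.eq_adjoint_iff]
  intro x y
  show (inner ℂ (dsum (ContinuousLinearMap.adjoint A) (ContinuousLinearMap.adjoint B) x) y : ℂ) = _
  rw [WithLp.prod_inner_apply, WithLp.prod_inner_apply]
  show (inner ℂ (ContinuousLinearMap.adjoint A x.fst) y.fst : ℂ)
      + inner ℂ (ContinuousLinearMap.adjoint B x.snd) y.snd
    = inner ℂ x.fst (A y.fst) + inner ℂ x.snd (B y.snd)
  rw [ContinuousLinearMap.adjoint_inner_left, ContinuousLinearMap.adjoint_inner_left]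


lemma compact_conj {G G' H H' : Type*} [NormedAddCommGroup G] [NormedSpace ℂ G]
    [NormedAddCommGroup G'] [NormedSpace ℂ G'] [NormedAddCommGroup H] [NormedSpace ℂ H]
    [NormedAddCommGroup H'] [NormedSpace ℂ H']
    {K : G →L[ℂ] H} (hK : IsCompactOperator ⇑K) (f : H →L[ℂ] H') (g : G' →L[ℂ] G) :
    IsCompactOperator ⇑(f ∘L K ∘L g) := by
  have h1 : IsCompactOperator (⇑K ∘ ⇑g) := hK.comp_clm g
  have h2 : IsCompactOperator (⇑f ∘ (⇑K ∘ ⇑g)) := h1.clm_comp f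
  exact h2

lemma essInvertible_dsum {A : E →L[ℂ] E} {B : F →L[ℂ] F} :
    essInvertible (dsum A B) ↔ essInvertible A ∧ essInvertible B := by
  set e := WithLp.prodContinuousLinearEquiv 2 ℂ E F
  constructor
  · rintro ⟨S, h1, h2⟩
    constructor
    · refine ⟨(ContinuousLinearMap.fst ℂ E F) ∘L (e : WithLp 2 (E × F) →L[ℂ] E × F) ∘L S ∘L
        (e.symm : (E × F) →L[ℂ] WithLp 2 (E × F)) ∘L (ContinuousLinearMap.inl ℂ E F), ?_, ?_⟩
      · have : ((ContinuousLinearMap.fst ℂ E F) ∘L (e : WithLp 2 (E × F) →L[ℂ] E × F) ∘L S ∘L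
            (e.symm : (E × F) →L[ℂ] WithLp 2 (E × F)) ∘L (ContinuousLinearMap.inl ℂ E F)) * A - 1
            = (ContinuousLinearMap.fst ℂ E F) ∘L (e : WithLp 2 (E × F) →L[ℂ] E × F) ∘L (S * dsum A B - 1) ∘L
              (e.symm : (E × F) →L[ℂ] WithLp 2 (E × F)) ∘L (ContinuousLinearMap.inl ℂ E F) := by
          ext x; simp [dsum, e]
        rw [this]
        have := compact_conj h1 ((ContinuousLinearMap.fst ℂ E F) ∘L (e : WithLp 2 (E × F) →L[ℂ] E × F))
          ((e.symm : (E × F) →L[ℂ] WithLp 2 (E × F)) ∘L (ContinuousLinearMap.inl ℂ E F))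
        simpa [ContinuousLinearMap.comp_assoc] using this
      · have : A * ((ContinuousLinearMap.fst ℂ E F) ∘L (e : WithLp 2 (E × F) →L[ℂ] E × F) ∘L S ∘L
            (e.symm : (E × F) →L[ℂ] WithLp 2 (E × F)) ∘L (ContinuousLinearMap.inl ℂ E F)) - 1
            = (ContinuousLinearMap.fst ℂ E F) ∘L (e : WithLp 2 (E × F) →L[ℂ] E × F) ∘L (dsum A B * S - 1) ∘L
              (e.symm : (E × F) →L[ℂ] WithLp 2 (E × F)) ∘L (ContinuousLinearMap.inl ℂ E F) := by
          ext x; simp [dsum, e]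
        rw [this]
        have := compact_conj h2 ((ContinuousLinearMap.fst ℂ E F) ∘L (e : WithLp 2 (E × F) →L[ℂ] E × F))
          ((e.symm : (E × F) →L[ℂ] WithLp 2 (E × F)) ∘L (ContinuousLinearMap.inl ℂ E F))
        simpa [ContinuousLinearMap.comp_assoc] using this
    · refine ⟨(ContinuousLinearMap.snd ℂ E F) ∘L (e : WithLp 2 (E × F) →L[ℂ] E × F) ∘L S ∘L
        (e.symm : (E × F) →L[ℂ] WithLp 2 (E × F)) ∘L (ContinuousLinearMap.inr ℂ E F), ?_, ?_⟩
      · have : ((ContinuousLinearMap.snd ℂ E F) ∘L (e : WithLp 2 (E × F) →L[ℂ] E × F) ∘L S ∘L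
            (e.symm : (E × F) →L[ℂ] WithLp 2 (E × F)) ∘L (ContinuousLinearMap.inr ℂ E F)) * B - 1
            = (ContinuousLinearMap.snd ℂ E F) ∘L (e : WithLp 2 (E × F) →L[ℂ] E × F) ∘L (S * dsum A B - 1) ∘L
              (e.symm : (E × F) →L[ℂ] WithLp 2 (E × F)) ∘L (ContinuousLinearMap.inr ℂ E F) := by
          ext x; simp [dsum, e]
        rw [this]
        have := compact_conj h1 ((ContinuousLinearMap.snd ℂ E F) ∘L (e : WithLp 2 (E × F) →L[ℂ] E × F))
          ((e.symm : (E × F) →L[ℂ] WithLp 2 (E × F)) ∘L (ContinuousLinearMap.inr ℂ E F))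
        simpa [ContinuousLinearMap.comp_assoc] using this
      · have : B * ((ContinuousLinearMap.snd ℂ E F) ∘L (e : WithLp 2 (E × F) →L[ℂ] E × F) ∘L S ∘L
            (e.symm : (E × F) →L[ℂ] WithLp 2 (E × F)) ∘L (ContinuousLinearMap.inr ℂ E F)) - 1
            = (ContinuousLinearMap.snd ℂ E F) ∘L (e : WithLp 2 (E × F) →L[ℂ] E × F) ∘L (dsum A B * S - 1) ∘L
              (e.symm : (E × F) →L[ℂ] WithLp 2 (E × F)) ∘L (ContinuousLinearMap.inr ℂ E F) := by
          ext x; simp [dsum, e]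
        rw [this]
        have := compact_conj h2 ((ContinuousLinearMap.snd ℂ E F) ∘L (e : WithLp 2 (E × F) →L[ℂ] E × F))
          ((e.symm : (E × F) →L[ℂ] WithLp 2 (E × F)) ∘L (ContinuousLinearMap.inr ℂ E F))
        simpa [ContinuousLinearMap.comp_assoc] using this
  · rintro ⟨⟨SA, hA1, hA2⟩, ⟨SB, hB1, hB2⟩⟩
    refine ⟨dsum SA SB, ?_, ?_⟩
    · have hrw : dsum SA SB * dsum A B - 1
          = ((e.symm : (E × F) →L[ℂ] WithLp 2 (E × F)) ∘L (ContinuousLinearMap.inl ℂ E F) ∘L (SA * A - 1) ∘L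
              (ContinuousLinearMap.fst ℂ E F) ∘L (e : WithLp 2 (E × F) →L[ℂ] E × F))
            + ((e.symm : (E × F) →L[ℂ] WithLp 2 (E × F)) ∘L (ContinuousLinearMap.inr ℂ E F) ∘L (SB * B - 1) ∘L
              (ContinuousLinearMap.snd ℂ E F) ∘L (e : WithLp 2 (E × F) →L[ℂ] E × F)) := by
        ext x
        show (dsum SA SB) (dsum A B x) - x
            = e.symm ((SA * A - 1) x.fst, 0) + e.symm (0, (SB * B - 1) x.snd)
        rw [← map_add]
        calc (dsum SA SB) (dsum A B x) - x
            = e.symm (SA (A x.fst), SB (B x.snd)) - e.symm (x.fst, x.snd) := rfl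
          _ = e.symm ((SA (A x.fst), SB (B x.snd)) - (x.fst, x.snd)) := (map_sub _ _ _).symm
          _ = _ := by
              congr 1
              simp [Prod.ext_iff, ContinuousLinearMap.sub_apply]
      rw [hrw]
      refine IsCompactOperator.add ?_ ?_
      · have := compact_conj hA1 ((e.symm : (E × F) →L[ℂ] WithLp 2 (E × F)) ∘L (ContinuousLinearMap.inl ℂ E F))
          ((ContinuousLinearMap.fst ℂ E F) ∘L (e : WithLp 2 (E × F) →L[ℂ] E × F))
        exact this
      · have := compact_conj hB1 ((e.symm : (E × F) →L[ℂ] WithLp 2 (E × F)) ∘L (ContinuousLinearMap.inr ℂ E F))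
          ((ContinuousLinearMap.snd ℂ E F) ∘L (e : WithLp 2 (E × F) →L[ℂ] E × F))
        exact this
    · have hrw : dsum A B * dsum SA SB - 1
          = ((e.symm : (E × F) →L[ℂ] WithLp 2 (E × F)) ∘L (ContinuousLinearMap.inl ℂ E F) ∘L (A * SA - 1) ∘L
              (ContinuousLinearMap.fst ℂ E F) ∘L (e : WithLp 2 (E × F) →L[ℂ] E × F))
            + ((e.symm : (E × F) →L[ℂ] WithLp 2 (E × F)) ∘L (ContinuousLinearMap.inr ℂ E F) ∘L (B * SB - 1) ∘L
              (ContinuousLinearMap.snd ℂ E F) ∘L (e : WithLp 2 (E × F) →L[ℂ] E × F)) := by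
        ext x
        show (dsum A B) (dsum SA SB x) - x
            = e.symm ((A * SA - 1) x.fst, 0) + e.symm (0, (B * SB - 1) x.snd)
        rw [← map_add]
        calc (dsum A B) (dsum SA SB x) - x
            = e.symm (A (SA x.fst), B (SB x.snd)) - e.symm (x.fst, x.snd) := rfl
          _ = e.symm ((A (SA x.fst), B (SB x.snd)) - (x.fst, x.snd)) := (map_sub _ _ _).symm
          _ = _ := by
              congr 1
              simp [Prod.ext_iff, ContinuousLinearMap.sub_apply]
      rw [hrw]
      refine IsCompactOperator.add ?_ ?_
      · have := compact_conj hA2 ((e.symm : (E × F) →L[ℂ] WithLp 2 (E × F)) ∘L (ContinuousLinearMap.inl ℂ E F))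
          ((ContinuousLinearMap.fst ℂ E F) ∘L (e : WithLp 2 (E × F) →L[ℂ] E × F))
        exact this
      · have := compact_conj hB2 ((e.symm : (E × F) →L[ℂ] WithLp 2 (E × F)) ∘L (ContinuousLinearMap.inr ℂ E F))
          ((ContinuousLinearMap.snd ℂ E F) ∘L (e : WithLp 2 (E × F) →L[ℂ] E × F))
        exact this

lemma ker_fd_of_essInvertible {T : E →L[ℂ] E} (h : essInvertible T) :
    FiniteDimensional ℂ (LinearMap.ker (T : E →ₗ[ℂ] E)) := by
  obtain ⟨S, h1, -⟩ := h
  set K : E →L[ℂ] E := S * T - 1 with hKdef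
  have hximg : ∀ x : E, x ∈ LinearMap.ker (T : E →ₗ[ℂ] E) → K x = -x := by
    intro x hx
    have : T x = 0 := hx
    simp [hKdef, ContinuousLinearMap.sub_apply, ContinuousLinearMap.mul_apply, this]
  -- the closed unit ball of ker T is compact
  set C : Set E := {x : E | x ∈ LinearMap.ker (T : E →ₗ[ℂ] E) ∧ ‖x‖ ≤ 1} with hC
  have hCclosed : IsClosed C := by
    have : C = (LinearMap.ker (T : E →ₗ[ℂ] E) : Set E) ∩ Metric.closedBall 0 1 := by
      ext x; simp [hC, Metric.mem_closedBall, dist_zero_right]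
    rw [this]
    exact (ContinuousLinearMap.isClosed_ker T).inter Metric.isClosed_closedBall
  have hQ : IsCompact (closure <| (K : E →ₗ[ℂ] E) '' Metric.closedBall 0 1) :=
    IsCompactOperator.isCompact_closure_image_closedBall (f := (K : E →ₗ[ℂ] E)) h1 1
  have hsub : -C ⊆ closure ((K : E →ₗ[ℂ] E) '' Metric.closedBall 0 1) := by
    intro y hy
    rw [Set.mem_neg] at hy
    obtain ⟨hk, hn⟩ := hy
    apply subset_closure
    refine ⟨-y, ?_, ?_⟩
    · simpa [Metric.mem_closedBall, dist_zero_right] using hn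
    · rw [show ((K : E →ₗ[ℂ] E) (-y) : E) = K (-y) from rfl, hximg _ hk, neg_neg]
  have hnegC : IsCompact (-C) := hQ.of_isClosed_subset hCclosed.neg hsub
  have hCcompact : IsCompact C := by simpa using hnegC.neg
  -- transfer to the subtype
  have hball : IsCompact (Metric.closedBall (0 : LinearMap.ker (T : E →ₗ[ℂ] E)) 1) := by
    rw [Topology.IsEmbedding.isCompact_iff (Topology.IsEmbedding.subtypeVal)]
    have : Subtype.val '' Metric.closedBall (0 : LinearMap.ker (T : E →ₗ[ℂ] E)) 1 = C := by
      ext x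
      constructor
      · rintro ⟨⟨y, hy⟩, hm, rfl⟩
        exact ⟨hy, by simpa [Metric.mem_closedBall, dist_zero_right] using hm⟩
      · rintro ⟨hk, hn⟩
        exact ⟨⟨x, hk⟩, by simpa [Metric.mem_closedBall, dist_zero_right] using hn, rfl⟩
    rw [this]
    exact hCcompact
  exact FiniteDimensional.of_isCompact_closedBall₀ ℂ one_pos hball

open Filter Topology in
lemma isClosed_range_of_essInvertible {T : E →L[ℂ] E} (h : essInvertible T) :
    IsClosed (Set.range T) := by
  obtain ⟨S, h1, -⟩ := h
  set K : E →L[ℂ] E := S * T - 1 with hKdef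
  have hKx : ∀ x, K x = S (T x) - x := fun x => rfl
  set M : Submodule ℂ E := (LinearMap.ker (T : E →ₗ[ℂ] E))ᗮ with hM
  have hMclosed : IsClosed (M : Set E) := Submodule.isClosed_orthogonal _
  haveI : CompleteSpace (LinearMap.ker (T : E →ₗ[ℂ] E)) :=
    (ContinuousLinearMap.isClosed_ker T).completeSpace_coe
  have hbdd : ∃ c : NNReal, ∀ m ∈ M, ‖m‖ ≤ c * ‖T m‖ := by
    by_contra hcon
    push_neg at hcon
    have hseq : ∀ n : ℕ, ∃ u : E, u ∈ M ∧ ‖u‖ = 1 ∧ ‖T u‖ < 1/(n+1 : ℝ) := by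
      intro n
      obtain ⟨m, hmM, hm⟩ := hcon ((n+1 : ℕ) : NNReal)
      have hm0 : m ≠ 0 := by
        rintro rfl
        simp at hm
      have hmpos : (0:ℝ) < ‖m‖ := norm_pos_iff.mpr hm0
      have hninv : ‖((‖m‖ : ℂ))⁻¹‖ = ‖m‖⁻¹ := by
        rw [norm_inv, Complex.norm_real, norm_norm]
      refine ⟨((‖m‖ : ℂ))⁻¹ • m, M.smul_mem _ hmM, ?_, ?_⟩
      · rw [norm_smul, hninv, inv_mul_cancel₀ (ne_of_gt hmpos)]
      · rw [map_smul, norm_smul, hninv]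
        rw [inv_mul_lt_iff₀ hmpos, mul_one_div, lt_div_iff₀ (by positivity : (0:ℝ) < (n:ℝ)+1)]
        calc ‖T m‖ * ((n:ℝ)+1) = (((n+1:ℕ) : NNReal) : ℝ) * ‖T m‖ := by push_cast; ring
        _ < ‖m‖ := hm
    choose u hu1 hu2 hu3 using hseq
    have hT0 : Tendsto (fun n => T (u n)) atTop (𝓝 (0:E)) := by
      rw [tendsto_iff_norm_sub_tendsto_zero]
      simp only [sub_zero]
      apply squeeze_zero (fun n => norm_nonneg _) (fun n => le_of_lt (hu3 n))
      exact tendsto_one_div_add_atTop_nhds_zero_nat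
    have hST : Tendsto (fun n => S (T (u n))) atTop (𝓝 (0:E)) := by
      have := (S.continuous.tendsto 0).comp hT0
      rw [map_zero] at this
      exact this
    have hQ : IsCompact (closure ((K : E →ₗ[ℂ] E) '' Metric.closedBall 0 1)) :=
      IsCompactOperator.isCompact_closure_image_closedBall (f := (K : E →ₗ[ℂ] E)) h1 1
    have hmem : ∀ n, K (u n) ∈ closure ((K : E →ₗ[ℂ] E) '' Metric.closedBall 0 1) := by
      intro n
      exact subset_closure ⟨u n, by simp [Metric.mem_closedBall, dist_zero_right, hu2 n], rfl⟩
    obtain ⟨z, hz, φ, hφ, hzlim⟩ := hQ.tendsto_subseq hmem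
    have hulim : Tendsto (fun n => u (φ n)) atTop (𝓝 (0 - z)) := by
      have heq : (fun n => u (φ n)) = fun n => S (T (u (φ n))) - K (u (φ n)) := by
        funext n
        rw [hKx]
        abel
      rw [heq]
      exact (hST.comp hφ.tendsto_atTop).sub hzlim
    have hnrm : ‖(0:E) - z‖ = 1 := by
      have h2 : Tendsto (fun n => ‖u (φ n)‖) atTop (𝓝 ‖(0:E) - z‖) := hulim.norm
      have h3 : Tendsto (fun n => ‖u (φ n)‖) atTop (𝓝 1) := by
        have : (fun n => ‖u (φ n)‖) = fun _ => 1 := funext fun n => hu2 _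
        rw [this]
        exact tendsto_const_nhds
      exact tendsto_nhds_unique h2 h3
    have hzM : (0:E) - z ∈ M :=
      hMclosed.mem_of_tendsto hulim (Filter.Eventually.of_forall fun n => hu1 _)
    have hzker : (0:E) - z ∈ LinearMap.ker (T : E →ₗ[ℂ] E) := by
      have h4 : Tendsto (fun n => T (u (φ n))) atTop (𝓝 (T ((0:E) - z))) :=
        (T.continuous.tendsto _).comp hulim
      have h5 : Tendsto (fun n => T (u (φ n))) atTop (𝓝 (0:E)) := hT0.comp hφ.tendsto_atTop
      exact LinearMap.mem_ker.mpr (tendsto_nhds_unique h4 h5)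
    have hmem0 : (0:E) - z ∈ (LinearMap.ker (T : E →ₗ[ℂ] E) ⊓ (LinearMap.ker (T : E →ₗ[ℂ] E))ᗮ : Submodule ℂ E) :=
      ⟨hzker, hzM⟩
    have hzero : (0:E) - z = 0 := by
      rw [(Submodule.orthogonal_disjoint (LinearMap.ker (T : E →ₗ[ℂ] E))).eq_bot] at hmem0
      simpa using hmem0
    rw [hzero] at hnrm
    simp at hnrm
  obtain ⟨c, hc⟩ := hbdd
  haveI : CompleteSpace M := hMclosed.completeSpace_coe
  set T' : M →L[ℂ] E := T.comp M.subtypeL with hT'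
  have hanti : AntilipschitzWith c ⇑T' :=
    ContinuousLinearMap.antilipschitz_of_bound T' (fun x => hc x x.2)
  have hclosed' : IsClosed (Set.range ⇑T') := hanti.isClosed_range T'.uniformContinuous
  have hrange : Set.range ⇑T = Set.range ⇑T' := by
    apply subset_antisymm
    · rintro _ ⟨x, rfl⟩
      obtain ⟨k, hk, m, hm, rfl⟩ := (LinearMap.ker (T : E →ₗ[ℂ] E)).exists_add_mem_mem_orthogonal x
      refine ⟨⟨m, hm⟩, ?_⟩
      have : T k = 0 := hk
      simp [hT', map_add, this]
    · rintro _ ⟨m, rfl⟩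
      exact ⟨m, rfl⟩
  rw [hrange]
  exact hclosed'

lemma essInvertible_of_isUnit {T : E →L[ℂ] E} (h : IsUnit T) : essInvertible T := by
  obtain ⟨u, hu⟩ := h
  refine ⟨↑u⁻¹, ?_, ?_⟩
  · have : (↑u⁻¹ : E →L[ℂ] E) * T - 1 = 0 := by rw [← hu, u.inv_mul, sub_self]
    rw [this]
    exact isCompactOperator_zero
  · have : T * (↑u⁻¹ : E →L[ℂ] E) - 1 = 0 := by rw [← hu, u.mul_inv, sub_self]
    rw [this]
    exact isCompactOperator_zero

lemma isUnit_of_kers {T : E →L[ℂ] E} (hr : IsClosed (Set.range T))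
    (h1 : LinearMap.ker (T : E →ₗ[ℂ] E) = ⊥) (h2 : LinearMap.ker ((ContinuousLinearMap.adjoint T : E →L[ℂ] E) : E →ₗ[ℂ] E) = ⊥) :
    IsUnit T := by
  rw [ContinuousLinearMap.isUnit_iff_bijective]
  refine ⟨LinearMap.ker_eq_bot.mp h1, ?_⟩
  have hrc : IsClosed ((LinearMap.range (T : E →ₗ[ℂ] E) : Submodule ℂ E) : Set E) := by
    rw [LinearMap.coe_range]
    exact hr
  haveI : CompleteSpace (LinearMap.range (T : E →ₗ[ℂ] E)) := hrc.completeSpace_coe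
  have horth : (LinearMap.range (T : E →ₗ[ℂ] E))ᗮ = ⊥ := by
    rw [Submodule.eq_bot_iff]
    intro y hy
    have hTy : ContinuousLinearMap.adjoint T y = 0 := by
      have h3 : (inner ℂ (y : E) (T (ContinuousLinearMap.adjoint T y)) : ℂ) = 0 := by
        have := (Submodule.mem_orthogonal _ y).mp hy (T (ContinuousLinearMap.adjoint T y))
          (LinearMap.mem_range_self _ _)
        rw [← inner_conj_symm, this, map_zero]
      rw [← ContinuousLinearMap.adjoint_inner_left] at h3
      exact inner_self_eq_zero.mp h3
    have := h2 ▸ LinearMap.mem_ker.mpr hTy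
    exact this
  have : LinearMap.range (T : E →ₗ[ℂ] E) = ⊤ := by rwa [Submodule.orthogonal_eq_bot_iff] at horth
  exact LinearMap.range_eq_top.mp this

lemma rank_ker_dsum {A : E →L[ℂ] E} {B : F →L[ℂ] F} (hB : LinearMap.ker (B : F →ₗ[ℂ] F) = ⊥) :
    Module.rank ℂ (LinearMap.ker (dsum A B : WithLp 2 (E × F) →ₗ[ℂ] WithLp 2 (E × F))) = Module.rank ℂ (LinearMap.ker (A : E →ₗ[ℂ] E)) := by
  set e := WithLp.prodContinuousLinearEquiv 2 ℂ E F with he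
  set f0 : WithLp 2 (E × F) →ₗ[ℂ] E :=
    (((ContinuousLinearMap.fst ℂ E F) ∘L (e : WithLp 2 (E × F) →L[ℂ] E × F))
      : WithLp 2 (E × F) →L[ℂ] E).toLinearMap with hf0
  have hmap : ∀ x : LinearMap.ker (dsum A B : WithLp 2 (E × F) →ₗ[ℂ] WithLp 2 (E × F)),
      f0.comp (LinearMap.ker (dsum A B : WithLp 2 (E × F) →ₗ[ℂ] WithLp 2 (E × F))).subtype x ∈ LinearMap.ker (A : E →ₗ[ℂ] E) := fun x =>
    LinearMap.mem_ker.mpr (mem_ker_dsum_iff.mp x.2).1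
  set f : LinearMap.ker (dsum A B : WithLp 2 (E × F) →ₗ[ℂ] WithLp 2 (E × F)) →ₗ[ℂ] LinearMap.ker (A : E →ₗ[ℂ] E) :=
    (f0.comp (LinearMap.ker (dsum A B : WithLp 2 (E × F) →ₗ[ℂ] WithLp 2 (E × F))).subtype).codRestrict _ hmap with hf
  have hsnd : ∀ x : LinearMap.ker (dsum A B : WithLp 2 (E × F) →ₗ[ℂ] WithLp 2 (E × F)), (x : WithLp 2 (E × F)).snd = 0 := fun x => by
    have h := (mem_ker_dsum_iff.mp x.2).2
    exact (Submodule.eq_bot_iff _).mp hB _ (LinearMap.mem_ker.mpr h)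
  have hbij : Function.Bijective f := by
    constructor
    · intro x y hxy
      apply Subtype.ext
      have h1 : (x : WithLp 2 (E × F)).fst = (y : WithLp 2 (E × F)).fst :=
        congrArg Subtype.val hxy
      have h2 : (x : WithLp 2 (E × F)).snd = (y : WithLp 2 (E × F)).snd := by
        rw [hsnd x, hsnd y]
      calc (x : WithLp 2 (E × F))
          = e.symm ((x : WithLp 2 (E × F)).fst, (x : WithLp 2 (E × F)).snd) := rfl
        _ = e.symm ((y : WithLp 2 (E × F)).fst, (y : WithLp 2 (E × F)).snd) := by rw [h1, h2]
        _ = (y : WithLp 2 (E × F)) := rfl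
    · intro y
      refine ⟨⟨e.symm ((y : E), 0), mem_ker_dsum_iff.mpr ⟨?_, ?_⟩⟩, ?_⟩
      · exact y.2
      · exact map_zero B
      · apply Subtype.ext
        rfl
  exact (LinearEquiv.ofBijective f hbij).rank_eq

lemma not_mem_spectrum_iff_isUnit (T : E →L[ℂ] E) (l : ℂ) :
    l ∉ spectrum ℂ T ↔ IsUnit (T - l • (1 : E →L[ℂ] E)) := by
  rw [spectrum.notMem_iff]
  constructor
  · intro h
    simpa [neg_sub, Algebra.algebraMap_eq_smul_one] using h.neg
  · intro h
    simpa [neg_sub, Algebra.algebraMap_eq_smul_one] using h.neg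

lemma isSemiFredholm_of_isUnit {T : E →L[ℂ] E} (h : IsUnit T) : IsSemiFredholm T := by
  have hbij := ContinuousLinearMap.isUnit_iff_bijective.mp h
  constructor
  · rw [Set.range_eq_univ.mpr hbij.2]
    exact isClosed_univ
  · left
    have hk : LinearMap.ker (T : E →ₗ[ℂ] E) = ⊥ := LinearMap.ker_eq_bot.mpr hbij.1
    rw [hk]
    infer_instance

lemma ker_eq_bot_of_isUnit {T : E →L[ℂ] E} (h : IsUnit T) : LinearMap.ker (T : E →ₗ[ℂ] E) = ⊥ :=
  LinearMap.ker_eq_bot.mpr (ContinuousLinearMap.isUnit_iff_bijective.mp h).1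

lemma adjoint_sub_smul (T : E →L[ℂ] E) (l : ℂ) :
    ContinuousLinearMap.adjoint (T - l • (1 : E →L[ℂ] E))
      = ContinuousLinearMap.adjoint T - (starRingEnd ℂ l) • (1 : E →L[ℂ] E) := by
  rw [map_sub, LinearIsometryEquiv.map_smulₛₗ]
  congr 1
  rw [show (1 : E →L[ℂ] E) = ContinuousLinearMap.id ℂ E from rfl,
    ContinuousLinearMap.adjoint_id]

end Aux

/-- Let `H`, `H̃` be separable complex Hilbert spaces, `A ∈ B(H)`,
`B ∈ B(H̃)` with `σ(B) = σ_p(B) = ℂ \\ ρ_sF(A)`.  Then (i) `σ(A ⊕ B) = σ(A)`;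
(ii) `σ_c(A ⊕ B) = ∅`; (iii) `σ_e(A ⊕ B) = σ_e(A)`; (iv) `σ_0(A ⊕ B) = σ_0(A)` and
`dim ker (A ⊕ B - l) = dim ker (A - l)` for all `l ∈ σ_0(A)`. -/
theorem dsum_spectra
    (E : Type u) [NormedAddCommGroup E] [InnerProductSpace ℂ E] [CompleteSpace E]
    [TopologicalSpace.SeparableSpace E]
    (F : Type u) [NormedAddCommGroup F] [InnerProductSpace ℂ F] [CompleteSpace F]
    [TopologicalSpace.SeparableSpace F]
    (A : E →L[ℂ] E) (B : F →L[ℂ] F)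
    (hB1 : spectrum ℂ B = pointSpectrum B) (hB2 : spectrum ℂ B = (rhoSF A)ᶜ) :
    spectrum ℂ (dsum A B) = spectrum ℂ A ∧
      continuousSpectrum (dsum A B) = ∅ ∧
      essSpectrum (dsum A B) = essSpectrum A ∧
      normalSpectrum (dsum A B) = normalSpectrum A ∧
      ∀ l ∈ normalSpectrum A,
        Module.rank ℂ
            (LinearMap.ker ((dsum A B - l • (1 : WithLp 2 (E × F) →L[ℂ] WithLp 2 (E × F)) :
              WithLp 2 (E × F) →L[ℂ] WithLp 2 (E × F)) : WithLp 2 (E × F) →ₗ[ℂ] WithLp 2 (E × F))) =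
          Module.rank ℂ (LinearMap.ker ((A - l • (1 : E →L[ℂ] E) : E →L[ℂ] E) : E →ₗ[ℂ] E)) := by
  -- B's spectrum is contained in A's
  have hBA : spectrum ℂ B ⊆ spectrum ℂ A := by
    intro l hl
    by_contra hA
    have hu := (not_mem_spectrum_iff_isUnit A l).mp hA
    have hrho : l ∈ rhoSF A := isSemiFredholm_of_isUnit hu
    rw [hB2] at hl
    exact hl hrho
  -- (i)
  have hspec : spectrum ℂ (dsum A B) = spectrum ℂ A := by
    rw [spectrum_dsum, Set.union_eq_self_of_subset_right hBA]
  -- essential spectrum of dsum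
  have hessd : essSpectrum (dsum A B) = essSpectrum A ∪ essSpectrum B := by
    ext l
    simp only [essSpectrum, Set.mem_setOf_eq, Set.mem_union]
    rw [dsum_sub_smul, essInvertible_dsum]
    tauto
  have hessBA : essSpectrum B ⊆ essSpectrum A := by
    intro l hl
    by_contra hA
    have hinv : essInvertible (A - l • 1) := not_not.mp hA
    have hsf : IsSemiFredholm (A - l • 1) :=
      ⟨isClosed_range_of_essInvertible hinv, Or.inl (ker_fd_of_essInvertible hinv)⟩
    have hlB : l ∉ spectrum ℂ B := by
      rw [hB2]
      exact fun hc => hc hsf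
    have : essInvertible (B - l • 1) :=
      essInvertible_of_isUnit ((not_mem_spectrum_iff_isUnit B l).mp hlB)
    exact hl this
  have hess : essSpectrum (dsum A B) = essSpectrum A := by
    rw [hessd, Set.union_eq_self_of_subset_right hessBA]
  -- (ii)
  have hcont : continuousSpectrum (dsum A B) = ∅ := by
    rw [Set.eq_empty_iff_forall_notMem]
    rintro l ⟨hlspec, hlnot⟩
    rw [Set.mem_union] at hlnot
    push_neg at hlnot
    obtain ⟨hp, hq⟩ := hlnot
    have hkd : LinearMap.ker ((dsum A B - l • 1 : WithLp 2 (E × F) →L[ℂ] WithLp 2 (E × F)) : WithLp 2 (E × F) →ₗ[ℂ] WithLp 2 (E × F)) = ⊥ := not_not.mp hp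
    rw [dsum_sub_smul] at hkd
    obtain ⟨hkA, hkB⟩ := ker_dsum_eq_bot_iff.mp hkd
    have hlB : l ∉ spectrum ℂ B := by
      rw [hB1]
      exact fun hc => hc hkB
    have hlrho : l ∈ rhoSF A := by
      have h2 := hB2 ▸ hlB
      simpa using h2
    obtain ⟨hclosed, -⟩ := hlrho
    have hconj : (starRingEnd ℂ) l ∉ pointSpectrum (ContinuousLinearMap.adjoint (dsum A B)) :=
      fun hmem => hq ⟨_, hmem, by simp⟩
    have hkadj : LinearMap.ker ((ContinuousLinearMap.adjoint (dsum A B)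
        - (starRingEnd ℂ) l • 1 : WithLp 2 (E × F) →L[ℂ] WithLp 2 (E × F)) : WithLp 2 (E × F) →ₗ[ℂ] WithLp 2 (E × F)) = ⊥ := not_not.mp hconj
    rw [adjoint_dsum, dsum_sub_smul] at hkadj
    obtain ⟨hkA', hkB'⟩ := ker_dsum_eq_bot_iff.mp hkadj
    have hunit : IsUnit (A - l • 1) := by
      refine isUnit_of_kers hclosed hkA ?_
      rw [adjoint_sub_smul]
      exact hkA'
    have hlA : l ∉ spectrum ℂ A := (not_mem_spectrum_iff_isUnit A l).mpr hunit
    rw [spectrum_dsum] at hlspec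
    rcases hlspec with h | h
    · exact hlA h
    · exact hlB h
  -- (iv) set equality
  have hnorm : normalSpectrum (dsum A B) = normalSpectrum A := by
    unfold normalSpectrum
    rw [hspec, hess]
  refine ⟨hspec, hcont, hess, hnorm, ?_⟩
  -- (iv) rank equality
  intro l hl
  have hle : l ∉ essSpectrum A := hl.2.2
  have hinv : essInvertible (A - l • 1) := not_not.mp hle
  have hsf : IsSemiFredholm (A - l • 1) :=
    ⟨isClosed_range_of_essInvertible hinv, Or.inl (ker_fd_of_essInvertible hinv)⟩
  have hlB : l ∉ spectrum ℂ B := by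
    rw [hB2]
    exact fun hc => hc hsf
  have hkB : LinearMap.ker ((B - l • 1 : F →L[ℂ] F) : F →ₗ[ℂ] F) = ⊥ :=
    ker_eq_bot_of_isUnit ((not_mem_spectrum_iff_isUnit B l).mp hlB)
  rw [dsum_sub_smul]
  exact rank_ker_dsum hkB


end
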